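/- arXiv:1705.09385 — 3 statements merged into one kernel-verified Lean document; each statement's English description precedes it below -/
import Mathlib

section
/- If a tree H is a shortest path graph, then H is a path. -/
open SimpleGraph

/-- The type of `a,b`-geodesics in `G`: paths from `a` to `b` of length `d_G(a,b)`. -/
def Geodesic {V : Type*} (G : SimpleGraph V) (a b : V) : Type _ :=
  {p : G.Walk a b // p.IsPath ∧ p.length = G.dist a b}

/-- Two geodesics differ at exactly the index `i` (comparing vertex sequences). -/
def DiffAt {V : Type*} {G : SimpleGraph V} {a b : V} (U W : Geodesic G a b) (i : ℕ) : Prop :=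
  U.1.support.getD i a ≠ W.1.support.getD i a ∧
    ∀ j, j ≠ i → U.1.support.getD j a = W.1.support.getD j a

/-- The shortest path graph `S(G,a,b)`: vertices are `a,b`-geodesics, adjacent iff their
vertex sequences differ in exactly one position. -/
def SPG {V : Type*} (G : SimpleGraph V) (a b : V) : SimpleGraph (Geodesic G a b) where
  Adj U W := ∃ i, DiffAt U W i
  symm := by
    constructor
    rintro U W ⟨i, hne, hj⟩
    exact ⟨i, hne.symm, fun j hji => (hj j hji).symm⟩
  loopless := by
    constructor
    rintro U ⟨i, hne, -⟩
    exact hne rfl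

/-- A graph is a shortest path graph if it is isomorphic to `S(G,a,b)` for some `G`, `a ≠ b`. -/
def IsSPGraph {α : Type*} (H : SimpleGraph α) : Prop :=
  ∃ (V : Type) (G : SimpleGraph V) (a b : V), a ≠ b ∧ Nonempty (H ≃g SPG G a b)

section ListWalkHelpers

variable {V : Type*} {G : SimpleGraph V}

private lemma walk_eq_of_support_eq {a b : V} (p : G.Walk a b) :
    ∀ q : G.Walk a b, p.support = q.support → p = q := by
  induction p with
  | nil =>
    intro q h
    cases q with
    | nil => rfl
    | cons h' q' =>
      exfalso
      simp only [Walk.support_nil, Walk.support_cons, List.cons.injEq] at h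
      exact Walk.support_ne_nil q' h.2.symm
  | cons hadj p' ih =>
    intro q h
    cases q with
    | nil =>
      exfalso
      simp only [Walk.support_nil, Walk.support_cons, List.cons.injEq] at h
      exact Walk.support_ne_nil p' h.2
    | cons h' q' =>
      simp only [Walk.support_cons, List.cons.injEq] at h
      have hs := h.2
      rw [p'.support_eq_cons, q'.support_eq_cons] at hs
      obtain ⟨hcd, -⟩ := List.cons_eq_cons.mp hs
      subst hcd
      rw [ih q' h.2]

private lemma exists_walk_of_chain' :
    ∀ (l : List V) {a b : V}, l.Chain' G.Adj → l.head? = some a → l.getLast? = some b →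
      ∃ p : G.Walk a b, p.support = l := by
  intro l
  induction l with
  | nil => intro a b _ ha _; simp at ha
  | cons x t ih =>
    intro a b hc ha hb
    obtain rfl : x = a := by simpa using ha
    cases t with
    | nil =>
      obtain rfl : x = b := by simpa using hb
      exact ⟨Walk.nil, rfl⟩
    | cons y t' =>
      have hadj : G.Adj x y := (List.isChain_cons_cons.mp hc).1
      obtain ⟨q, hq⟩ := ih (List.isChain_cons_cons.mp hc).2 rfl (by simpa using hb)
      exact ⟨Walk.cons hadj q, by simp [hq]⟩

private lemma getD_set_ne {l : List V} {m j : ℕ} (h : m ≠ j) (x y : V) :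
    (l.set j y).getD m x = l.getD m x := by
  rcases lt_or_ge m l.length with hm | hm
  · rw [List.getD_eq_getElem _ _ (by simpa using hm), List.getD_eq_getElem _ _ hm,
      List.getElem_set_of_ne (Ne.symm h)]
  · rw [List.getD_eq_default _ _ (by simpa using hm), List.getD_eq_default _ _ hm]

private lemma getD_set_self (l : List V) {j : ℕ} (hj : j < l.length) (x y : V) :
    (l.set j y).getD j x = y := by
  rw [List.getD_eq_getElem _ _ (by simpa using hj)]
  simp

private lemma list_eq_of_getD (l₁ l₂ : List V) (x : V) (hlen : l₁.length = l₂.length)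
    (h : ∀ j, l₁.getD j x = l₂.getD j x) : l₁ = l₂ :=
  List.ext_getElem hlen fun j h1 h2 => by
    have := h j
    rwa [List.getD_eq_getElem _ _ h1, List.getD_eq_getElem _ _ h2] at this

private lemma head?_eq_of_getD {l : List V} (hl : l ≠ []) (x : V) :
    l.head? = some (l.getD 0 x) := by
  cases l with
  | nil => simp at hl
  | cons c t => rfl

private lemma getLast?_eq_of_getD {l : List V} (hl : l ≠ []) (x : V) :
    l.getLast? = some (l.getD (l.length - 1) x) := by
  rw [List.getLast?_eq_getLast_of_ne_nil hl, List.getLast_eq_getElem,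
    List.getD_eq_getElem _ _ (Nat.sub_lt (List.length_pos_iff.mpr hl) one_pos)]

private lemma chain'_of_getD {l : List V} (x : V)
    (h : ∀ m, m + 1 < l.length → G.Adj (l.getD m x) (l.getD (m + 1) x)) :
    l.Chain' G.Adj := by
  rw [show l.Chain' G.Adj ↔ List.IsChain G.Adj l from Iff.rfl, List.isChain_iff_getElem]
  intro m hm
  have h1 : m + 1 < l.length := by omega
  have := h m h1
  rwa [List.getD_eq_getElem _ _ (by omega), List.getD_eq_getElem _ _ h1] at this

private lemma adj_getD_of_walk {c e : V} (p : G.Walk c e) (x : V) {m : ℕ}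
    (h : m + 1 < p.support.length) :
    G.Adj (p.support.getD m x) (p.support.getD (m + 1) x) := by
  have := List.isChain_iff_getElem.mp p.isChain_adj_support m (by omega)
  rwa [← List.getD_eq_getElem _ x (by omega), ← List.getD_eq_getElem _ x h] at this

private lemma support_getD_length {a b : V} (p : G.Walk a b) (x : V) :
    p.support.getD p.length x = b := by
  induction p with
  | nil => rfl
  | cons h q ih => simpa [Walk.support_cons] using ih

end ListWalkHelpers

section GeodesicHelpers

variable {V : Type*} {G : SimpleGraph V} {a b : V}

private lemma geo_support_length (U : Geodesic G a b) :
    U.1.support.length = G.dist a b + 1 := by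
  rw [Walk.length_support, U.2.2]

private lemma geo_getD_zero (U : Geodesic G a b) (x : V) : U.1.support.getD 0 x = a := by
  rw [U.1.support_eq_cons]; rfl

private lemma geo_getD_dist (U : Geodesic G a b) (x : V) :
    U.1.support.getD (G.dist a b) x = b := by
  have h := support_getD_length U.1 x
  rwa [U.2.2] at h

private lemma diffAt_bounds {U W : Geodesic G a b} {i : ℕ} (h : DiffAt U W i) :
    0 < i ∧ i < G.dist a b := by
  have hi0 : i ≠ 0 := by
    rintro rfl; exact h.1 (by rw [geo_getD_zero, geo_getD_zero])
  have hid : i ≠ G.dist a b := by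
    rintro rfl; exact h.1 (by rw [geo_getD_dist, geo_getD_dist])
  have hile : i < G.dist a b + 1 := by
    by_contra hh
    exact h.1 (by
      rw [List.getD_eq_default _ _ (by rw [geo_support_length]; omega),
        List.getD_eq_default _ _ (by rw [geo_support_length]; omega)])
  omega

private lemma geodesic_ext {U W : Geodesic G a b}
    (h : ∀ j, U.1.support.getD j a = W.1.support.getD j a) : U = W :=
  Subtype.ext (walk_eq_of_support_eq _ _
    (list_eq_of_getD _ _ a (by rw [geo_support_length, geo_support_length]) h))

private lemma diffAt_trans {U W X : Geodesic G a b} {i : ℕ}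
    (hW : DiffAt U W i) (hX : DiffAt U X i) (hne : W ≠ X) : DiffAt W X i := by
  refine ⟨?_, fun j hj => (hW.2 j hj).symm.trans (hX.2 j hj)⟩
  intro heq
  apply hne
  apply geodesic_ext
  intro j
  by_cases hj : j = i
  · subst hj; exact heq
  · exact (hW.2 j hj).symm.trans (hX.2 j hj)

private lemma exists_fourth {U W X : Geodesic G a b} {i k : ℕ}
    (hUW : DiffAt U W i) (hUX : DiffAt U X k) (hik : i + 2 ≤ k) :
    ∃ Y : Geodesic G a b, DiffAt Y W k ∧ DiffAt Y X i ∧ Y ≠ U := by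
  obtain ⟨hi0, hid⟩ := diffAt_bounds hUW
  obtain ⟨hk0, hkd⟩ := diffAt_bounds hUX
  set d := G.dist a b with hd
  set wi := W.1.support.getD i a with hwi
  set xk := X.1.support.getD k a with hxk
  set L := ((U.1.support.set i wi).set k xk) with hL
  have hSlen : U.1.support.length = d + 1 := geo_support_length U
  have hWlen : W.1.support.length = d + 1 := geo_support_length W
  have hXlen : X.1.support.length = d + 1 := geo_support_length X
  have hLlen : L.length = d + 1 := by simp [hL, hSlen]
  have hik' : i ≠ k := by omega
  have hLi : L.getD i a = wi := by
    rw [hL, getD_set_ne hik', getD_set_self _ (by omega)]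
  have hLk : L.getD k a = xk := by
    rw [hL, getD_set_self _ (by simp [hSlen]; omega)]
  have hLW : ∀ m, m ≠ k → L.getD m a = W.1.support.getD m a := by
    intro m hm
    by_cases hmi : m = i
    · subst hmi; rw [hLi]
    · rw [hL, getD_set_ne hm, getD_set_ne hmi]; exact hUW.2 m hmi
  have hLX : ∀ m, m ≠ i → L.getD m a = X.1.support.getD m a := by
    intro m hm
    by_cases hmk : m = k
    · subst hmk; rw [hLk]
    · rw [hL, getD_set_ne hmk, getD_set_ne hm]; exact hUX.2 m hmk
  have hchain : L.Chain' G.Adj := by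
    apply chain'_of_getD a
    intro m hm
    rw [hLlen] at hm
    by_cases hcase : m + 1 < k
    · rw [hLW m (by omega), hLW (m + 1) (by omega)]
      exact adj_getD_of_walk W.1 a (by rw [hWlen]; omega)
    · rw [hLX m (by omega), hLX (m + 1) (by omega)]
      exact adj_getD_of_walk X.1 a (by rw [hXlen]; omega)
  have hLne : L ≠ [] := by
    intro hh; rw [hh] at hLlen; simp at hLlen
  have hhead : L.head? = some a := by
    rw [head?_eq_of_getD hLne a, hLW 0 (by omega), geo_getD_zero]
  have hlast : L.getLast? = some b := by
    rw [getLast?_eq_of_getD hLne a]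
    have h1 : L.length - 1 = d := by omega
    rw [h1, hLX d (by omega), geo_getD_dist]
  obtain ⟨Y0, hY0⟩ := exists_walk_of_chain' L hchain hhead hlast
  have hY0len : Y0.length = d := by
    have h2 := Y0.length_support
    rw [hY0, hLlen] at h2
    omega
  refine ⟨⟨Y0, Y0.isPath_of_length_eq_dist (by rw [hY0len]), by rw [hY0len]⟩, ?_, ?_, ?_⟩
  · refine ⟨?_, fun j hj => by rw [hY0]; exact hLW j hj⟩
    show Y0.support.getD k a ≠ _
    rw [hY0, hLk, ← hUW.2 k (by omega)]
    exact fun hh => hUX.1 hh.symm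
  · refine ⟨?_, fun j hj => by rw [hY0]; exact hLX j hj⟩
    show Y0.support.getD i a ≠ _
    rw [hY0, hLi, ← hUX.2 i (by omega)]
    exact fun hh => hUW.1 hh.symm
  · intro hYU
    apply hUW.1
    have h3 := congrArg (fun Z : Geodesic G a b => Z.1.support.getD i a) hYU
    simp only at h3
    rw [hY0, hLi] at h3
    exact h3.symm

end GeodesicHelpers

section PartA

private lemma no_three_neighbors {α : Type*} {H : SimpleGraph α} (htree : H.IsTree)
    (h : IsSPGraph H) {c w x z : α} (hw : H.Adj c w) (hx : H.Adj c x) (hz : H.Adj c z)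
    (hwx : w ≠ x) (hwz : w ≠ z) (hxz : x ≠ z) : False := by
  obtain ⟨V, G, aa, bb, hab, ⟨e⟩⟩ := h
  have unique := htree.existsUnique_path
  -- two distinct neighbors of `c` that are adjacent: contradiction
  have tri : ∀ {p q : α}, H.Adj c p → H.Adj c q → H.Adj p q → False := by
    intro p q h1 h2 h3
    obtain ⟨P, hP, hU⟩ := unique c q
    have e1 := hU (Walk.cons h2 Walk.nil) (by simp [Walk.isPath_def, h2.ne])
    have e2 := hU (Walk.cons h1 (Walk.cons h3 Walk.nil))
      (by simp [Walk.isPath_def, h1.ne, h2.ne, h3.ne])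
    have := congrArg Walk.length (e1.trans e2.symm)
    simp at this
  -- a 4-cycle: contradiction
  have quad : ∀ {p q y : α}, H.Adj c p → H.Adj c q → H.Adj y p → H.Adj y q →
      p ≠ q → y ≠ c → False := by
    intro p q y h1 h2 h3 h4 h5 h6
    obtain ⟨P, hP, hU⟩ := unique p q
    have e1 := hU (Walk.cons h1.symm (Walk.cons h2 Walk.nil))
      (by simp [Walk.isPath_def, h1.ne', h5, h2.ne])
    have e2 := hU (Walk.cons h3.symm (Walk.cons h4 Walk.nil))
      (by simp [Walk.isPath_def, h3.ne', h5, h4.ne])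
    have h7 := congrArg Walk.support (e1.trans e2.symm)
    simp [Walk.support_cons] at h7
    exact h6 h7.symm
  obtain ⟨i, hi⟩ := e.map_adj_iff.mpr hw
  obtain ⟨j, hj⟩ := e.map_adj_iff.mpr hx
  obtain ⟨k, hk⟩ := e.map_adj_iff.mpr hz
  have main : ∀ {p q : α} {i' k' : ℕ}, p ≠ q → H.Adj c p → H.Adj c q →
      DiffAt (e c) (e p) i' → DiffAt (e c) (e q) k' → i' + 2 ≤ k' → False := by
    intro p q i' k' hpq h1 h2 d1 d2 hle
    obtain ⟨Y, hYW, hYX, hYU⟩ := exists_fourth d1 d2 hle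
    have hy1 : H.Adj (e.symm Y) p := by
      have : (SPG G aa bb).Adj (e (e.symm Y)) (e p) := by
        rw [RelIso.apply_symm_apply]; exact ⟨k', hYW⟩
      exact e.map_adj_iff.mp this
    have hy2 : H.Adj (e.symm Y) q := by
      have : (SPG G aa bb).Adj (e (e.symm Y)) (e q) := by
        rw [RelIso.apply_symm_apply]; exact ⟨i', hYX⟩
      exact e.map_adj_iff.mp this
    have hyc : e.symm Y ≠ c := by
      intro hh
      apply hYU
      rw [← hh]
      exact (e.apply_symm_apply Y).symm
    exact quad h1 h2 hy1 hy2 hpq hyc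
  have same : ∀ {p q : α} {i' : ℕ}, p ≠ q → H.Adj c p → H.Adj c q →
      DiffAt (e c) (e p) i' → DiffAt (e c) (e q) i' → False := by
    intro p q i' hpq h1 h2 d1 d2
    have hne : e p ≠ e q := fun hh => hpq (e.injective hh)
    have hd := diffAt_trans d1 d2 hne
    exact tri h1 h2 (e.map_adj_iff.mp ⟨i', hd⟩)
  rcases eq_or_ne i j with rfl | hij
  · exact same hwx hw hx hi hj
  rcases eq_or_ne i k with rfl | hik
  · exact same hwz hw hz hi hk
  rcases eq_or_ne j k with rfl | hjk
  · exact same hxz hx hz hj hk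
  have hcases : i + 2 ≤ j ∨ j + 2 ≤ i ∨ i + 2 ≤ k ∨ k + 2 ≤ i ∨ j + 2 ≤ k ∨ k + 2 ≤ j := by
    omega
  rcases hcases with hc | hc | hc | hc | hc | hc
  · exact main hwx hw hx hi hj hc
  · exact main hwx.symm hx hw hj hi hc
  · exact main hwz hw hz hi hk hc
  · exact main hwz.symm hz hw hk hi hc
  · exact main hxz hx hz hj hk hc
  · exact main hxz.symm hz hx hk hj hc

end PartA

section PartB

variable {V : Type*} {G : SimpleGraph V}

private lemma exists_prefix_walk {u v : V} (p : G.Walk u v) :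
    ∀ t : ℕ, ∃ r : G.Walk u (p.getVert t), r.length ≤ t := by
  induction p with
  | nil => intro t; exact ⟨Walk.nil, by simp⟩
  | cons h q ih =>
    intro t
    cases t with
    | zero => rw [Walk.getVert_zero]; exact ⟨Walk.nil, by simp⟩
    | succ t =>
      obtain ⟨r, hr⟩ := ih t
      rw [Walk.getVert_cons_succ]
      exact ⟨Walk.cons h r, by simp only [Walk.length_cons]; omega⟩

private lemma exists_suffix_walk {u v : V} (p : G.Walk u v) :
    ∀ t : ℕ, ∃ r : G.Walk (p.getVert t) v, r.length ≤ p.length - t := by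
  induction p with
  | nil => intro t; exact ⟨Walk.nil, by simp⟩
  | cons h q ih =>
    intro t
    cases t with
    | zero => rw [Walk.getVert_zero]; exact ⟨Walk.cons h q, by simp⟩
    | succ t =>
      obtain ⟨r, hr⟩ := ih t
      rw [Walk.getVert_cons_succ]
      exact ⟨r, by simp only [Walk.length_cons]; omega⟩

private lemma geodesic_dist_getVert (hconn : G.Connected) {u v : V} (p : G.Walk u v)
    (hp : p.length = G.dist u v) {t : ℕ} (ht : t ≤ p.length) :
    G.dist u (p.getVert t) = t := by
  obtain ⟨r1, h1⟩ := exists_prefix_walk p t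
  obtain ⟨r2, h2⟩ := exists_suffix_walk p t
  have d1 : G.dist u (p.getVert t) ≤ t := le_trans (dist_le r1) h1
  have d2 : G.dist (p.getVert t) v ≤ p.length - t := le_trans (dist_le r2) h2
  have d3 := hconn.dist_triangle (u := u) (v := p.getVert t) (w := v)
  omega

private lemma geodesic_dist_getVert' (hconn : G.Connected) {u v : V} (p : G.Walk u v)
    (hp : p.length = G.dist u v) {t : ℕ} (ht : t ≤ p.length) :
    G.dist (p.getVert t) v = p.length - t := by
  obtain ⟨r2, h2⟩ := exists_suffix_walk p t
  have d1 := geodesic_dist_getVert hconn p hp ht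
  have d2 : G.dist (p.getVert t) v ≤ p.length - t := le_trans (dist_le r2) h2
  have d3 := hconn.dist_triangle (u := u) (v := p.getVert t) (w := v)
  omega

private lemma adj_dist_ne {α : Type*} {H : SimpleGraph α} (htree : H.IsTree) (ℓ : α)
    {u v : α} (huv : H.Adj u v) : H.dist ℓ u ≠ H.dist ℓ v := by
  have hconn := htree.isConnected
  intro heq
  rcases Nat.eq_zero_or_pos (H.dist ℓ u) with hm | hm
  · have h1 : ℓ = u := hconn.dist_eq_zero_iff.mp hm
    have h2 : ℓ = v := hconn.dist_eq_zero_iff.mp (heq ▸ hm)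
    exact huv.ne (h1 ▸ h2)
  · obtain ⟨P, hPp, hPl⟩ := (hconn.preconnected u ℓ).exists_path_of_dist
    have hPl' : P.length = H.dist ℓ u := by rw [hPl, dist_comm]
    have hvP : v ∉ P.support := by
      rw [Walk.mem_support_iff_exists_getVert]
      rintro ⟨t, hteq, ht⟩
      have hd := geodesic_dist_getVert' hconn P hPl ht
      rw [hteq] at hd
      have hd2 : H.dist v ℓ = H.dist ℓ u := by rw [dist_comm, ← heq]
      have ht0 : t = 0 := by omega
      rw [ht0, P.getVert_zero] at hteq
      exact huv.ne hteq
    have hQ : (Walk.cons huv.symm P).IsPath := (Walk.cons_isPath_iff _ _).mpr ⟨hPp, hvP⟩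
    obtain ⟨P2, hP2p, hP2l⟩ := (hconn.preconnected v ℓ).exists_path_of_dist
    obtain ⟨R, hR, hU⟩ := htree.existsUnique_path v ℓ
    have e1 := hU _ hQ
    have e2 := hU _ hP2p
    have h3 := congrArg Walk.length (e1.trans e2.symm)
    simp only [Walk.length_cons] at h3
    rw [hPl', hP2l] at h3
    have h6 : H.dist v ℓ = H.dist ℓ v := dist_comm ..
    omega

private lemma iso_path_of_tree {α : Type*} [Fintype α] {H : SimpleGraph α} (htree : H.IsTree)
    (hdeg : ∀ c w x z : α, H.Adj c w → H.Adj c x → H.Adj c z →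
      w ≠ x → w ≠ z → x ≠ z → False) :
    ∃ n, Nonempty (H ≃g pathGraph n) := by
  have hconn := htree.isConnected
  haveI hno : Nonempty α := hconn.nonempty
  have r : α := Classical.arbitrary α
  obtain ⟨ℓ, hℓ⟩ := Finite.exists_max (fun v => H.dist r v)
  -- ℓ is a leaf
  have hleaf : ∀ {p q : α}, H.Adj ℓ p → H.Adj ℓ q → p = q := by
    intro p q hp hq
    have key : ∀ {s : α}, H.Adj ℓ s →
        H.dist r s + 1 = H.dist r ℓ := by
      intro s hs
      have h1 : H.dist r s < H.dist r ℓ :=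
        lt_of_le_of_ne (hℓ s) (adj_dist_ne htree r hs.symm)
      have h2 : H.dist r ℓ ≤ H.dist r s + 1 := by
        have h3 := hconn.dist_triangle (u := r) (v := s) (w := ℓ)
        have h4 : H.dist s ℓ = 1 := dist_eq_one_iff_adj.mpr hs.symm
        omega
      omega
    have hdp := key hp
    have hdq := key hq
    obtain ⟨Pp, hPpp, hPpl⟩ := (hconn.preconnected p r).exists_path_of_dist
    obtain ⟨Pq, hPqp, hPql⟩ := (hconn.preconnected q r).exists_path_of_dist
    have hnot : ∀ {s : α} (P : H.Walk s r), P.IsPath → P.length = H.dist s r →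
        H.Adj ℓ s → ℓ ∉ P.support := by
      intro s P hP hPl hs
      rw [Walk.mem_support_iff_exists_getVert]
      rintro ⟨t, hteq, ht⟩
      have hd := geodesic_dist_getVert' hconn P hPl ht
      rw [hteq] at hd
      have hd2 : H.dist ℓ r = H.dist r ℓ := dist_comm ..
      have hd3 : H.dist s r = H.dist r s := dist_comm ..
      have := key hs
      omega
    have hQp : (Walk.cons hp Pp).IsPath :=
      (Walk.cons_isPath_iff _ _).mpr ⟨hPpp, hnot Pp hPpp hPpl hp⟩
    have hQq : (Walk.cons hq Pq).IsPath :=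
      (Walk.cons_isPath_iff _ _).mpr ⟨hPqp, hnot Pq hPqp hPql hq⟩
    obtain ⟨R, hR, hU⟩ := htree.existsUnique_path ℓ r
    have heq := (hU _ hQp).trans (hU _ hQq).symm
    have h2 := congrArg Walk.support heq
    simp only [Walk.support_cons, List.cons.injEq, true_and] at h2
    rw [Pp.support_eq_cons, Pq.support_eq_cons] at h2
    exact (List.cons_eq_cons.mp h2).1
  -- distance from ℓ is injective
  have hinj0 : ∀ e : ℕ, ∀ u v : α, H.dist ℓ u = e → H.dist ℓ v = e → u = v := by
    intro e
    induction e using Nat.strong_induction_on with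
    | _ e ih =>
      intro u v hu hv
      rcases Nat.eq_zero_or_pos e with rfl | he
      · have h1 : ℓ = u := hconn.dist_eq_zero_iff.mp hu
        have h2 : ℓ = v := hconn.dist_eq_zero_iff.mp hv
        rw [← h1, ← h2]
      · by_contra huv
        obtain ⟨Pu, hPup, hPul⟩ := (hconn.preconnected ℓ u).exists_path_of_dist
        obtain ⟨Pv, hPvp, hPvl⟩ := (hconn.preconnected ℓ v).exists_path_of_dist
        have hPul' : Pu.length = e := hPul.trans hu
        have hPvl' : Pv.length = e := hPvl.trans hv
        have hu' : H.dist ℓ (Pu.getVert (e - 1)) = e - 1 :=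
          geodesic_dist_getVert hconn Pu hPul (by omega)
        have hv' : H.dist ℓ (Pv.getVert (e - 1)) = e - 1 :=
          geodesic_dist_getVert hconn Pv hPvl (by omega)
        have heq' : Pu.getVert (e - 1) = Pv.getVert (e - 1) :=
          ih (e - 1) (by omega) _ _ hu' hv'
        have hadju : H.Adj (Pu.getVert (e - 1)) u := by
          have h4 := Pu.adj_getVert_succ (i := e - 1) (by omega)
          rwa [show e - 1 + 1 = Pu.length by omega, Pu.getVert_length] at h4
        have hadjv : H.Adj (Pu.getVert (e - 1)) v := by
          have h4 := Pv.adj_getVert_succ (i := e - 1) (by omega)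
          rw [show e - 1 + 1 = Pv.length by omega, Pv.getVert_length] at h4
          rwa [heq']
        rcases Nat.eq_zero_or_pos (e - 1) with he' | he'
        · have hℓ0 : Pu.getVert (e - 1) = ℓ := by rw [he', Pu.getVert_zero]
          rw [hℓ0] at hadju hadjv
          exact huv (hleaf hadju hadjv)
        · have hadj3 : H.Adj (Pu.getVert (e - 1)) (Pu.getVert (e - 1 - 1)) := by
            have h4 := Pu.adj_getVert_succ (i := e - 1 - 1) (by omega)
            rw [show e - 1 - 1 + 1 = e - 1 by omega] at h4
            exact h4.symm
          have hd3 : H.dist ℓ (Pu.getVert (e - 1 - 1)) = e - 1 - 1 :=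
            geodesic_dist_getVert hconn Pu hPul (by omega)
          refine hdeg (Pu.getVert (e - 1)) u v (Pu.getVert (e - 1 - 1))
            hadju hadjv hadj3 huv ?_ ?_
          · intro hh; rw [← hh] at hd3; omega
          · intro hh; rw [← hh] at hd3; omega
  -- the vertices are exactly at distances 0, ..., n-1
  have hsub : ∀ (v : α) (t : ℕ), t ≤ H.dist ℓ v → ∃ u, H.dist ℓ u = t := by
    intro v t ht
    obtain ⟨P, hPp, hPl⟩ := (hconn.preconnected ℓ v).exists_path_of_dist
    exact ⟨P.getVert t, geodesic_dist_getVert hconn P hPl (by omega)⟩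
  have hlt : ∀ v, H.dist ℓ v < Fintype.card α := by
    intro v
    have hch : ∀ t : Fin (H.dist ℓ v + 1), ∃ u, H.dist ℓ u = t :=
      fun t => hsub v t (by omega)
    choose g hg using hch
    have hginj : Function.Injective g := by
      intro s t hst
      apply Fin.ext
      rw [← hg s, ← hg t, hst]
    have := Fintype.card_le_of_injective g hginj
    simp only [Fintype.card_fin] at this
    omega
  let f : α → Fin (Fintype.card α) := fun v => ⟨H.dist ℓ v, hlt v⟩
  have hfinj : Function.Injective f := by
    intro u v huv
    exact hinj0 (H.dist ℓ v) u v (congrArg Fin.val huv) rfl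
  have hbij : Function.Bijective f :=
    (Fintype.bijective_iff_injective_and_card f).mpr ⟨hfinj, by simp⟩
  have step : ∀ {u v : α}, H.dist ℓ u + 1 = H.dist ℓ v → H.Adj u v := by
    intro u v h1
    obtain ⟨P, hPp, hPl⟩ := (hconn.preconnected ℓ v).exists_path_of_dist
    have h2 : H.dist ℓ (P.getVert (H.dist ℓ u)) = H.dist ℓ u :=
      geodesic_dist_getVert hconn P hPl (by omega)
    have h3 : P.getVert (H.dist ℓ u) = u := hinj0 _ _ _ h2 rfl
    have h4 := P.adj_getVert_succ (i := H.dist ℓ u) (by omega)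
    rwa [h3, show H.dist ℓ u + 1 = P.length by omega, P.getVert_length] at h4
  refine ⟨Fintype.card α, ⟨{ toEquiv := Equiv.ofBijective f hbij, map_rel_iff' := ?_ }⟩⟩
  intro u v
  simp only [Equiv.ofBijective_apply, pathGraph_adj]
  show (H.dist ℓ u + 1 = H.dist ℓ v ∨ H.dist ℓ v + 1 = H.dist ℓ u) ↔ H.Adj u v
  constructor
  · rintro (h1 | h1)
    · exact step h1
    · exact (step h1).symm
  · intro hadj
    have h1 := adj_dist_ne htree ℓ hadj
    have h2 : H.dist ℓ u ≤ H.dist ℓ v + 1 := by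
      have h3 := hconn.dist_triangle (u := ℓ) (v := v) (w := u)
      have h4 : H.dist v u = 1 := dist_eq_one_iff_adj.mpr hadj.symm
      omega
    have h5 : H.dist ℓ v ≤ H.dist ℓ u + 1 := by
      have h3 := hconn.dist_triangle (u := ℓ) (v := u) (w := v)
      have h4 : H.dist u v = 1 := dist_eq_one_iff_adj.mpr hadj
      omega
    omega

end PartB

theorem stmt15 {α : Type*} [Fintype α] (H : SimpleGraph α) (htree : H.IsTree)
    (h : IsSPGraph H) : ∃ n, Nonempty (H ≃g pathGraph n) := by
  apply iso_path_of_tree htree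
  intro c w x z hw hx hz hwx hwz hxz
  exact no_three_neighbors htree h hw hx hz hwx hwz hxz
end

section
/- The cycle C_k occurs as an induced subgraph of some shortest path graph if and only if k ≠ 5. -/
open SimpleGraph

-- Walks are determined by their supports
theorem walk_support_inj {V : Type*} {G : SimpleGraph V} :
    ∀ {u v : V} (p q : G.Walk u v), p.support = q.support → p = q
  | _, _, Walk.nil, Walk.nil, _ => rfl
  | _, _, Walk.nil, Walk.cons h' q', hs => by
      exfalso
      have := congrArg List.length hs
      simp [Walk.length_support] at this
  | _, _, Walk.cons h p', Walk.nil, hs => by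
      exfalso
      have := congrArg List.length hs
      simp [Walk.length_support] at this
  | _, _, @Walk.cons _ _ u x v h p', @Walk.cons _ _ _ y _ h' q', hs => by
      have hs' : p'.support = q'.support := by
        simpa [Walk.support_cons] using hs
      have hxy : x = y := by
        have h1 := p'.support_eq_cons
        have h2 := q'.support_eq_cons
        rw [h1, h2] at hs'
        exact (List.cons_eq_cons.mp hs').1
      subst hxy
      rw [walk_support_inj p' q' hs']

-- chain walks
def chainWalk {V : Type*} (G : SimpleGraph V) (c : ℕ → V) :
    ∀ n : ℕ, (∀ i, i < n → G.Adj (c i) (c (i+1))) → G.Walk (c 0) (c n)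
  | 0, _ => Walk.nil
  | n+1, h => (chainWalk G c n fun i hi => h i (Nat.lt_succ_of_lt hi)).concat
      (h n (Nat.lt_succ_self n))

theorem chainWalk_support {V : Type*} (G : SimpleGraph V) (c : ℕ → V) (n : ℕ)
    (h : ∀ i, i < n → G.Adj (c i) (c (i+1))) :
    (chainWalk G c n h).support = (List.range (n+1)).map c := by
  induction n with
  | zero => simp [chainWalk, List.range_succ]
  | succ n ih =>
    simp [chainWalk, Walk.support_concat, ih, List.range_succ]

theorem chainWalk_length {V : Type*} (G : SimpleGraph V) (c : ℕ → V) (n : ℕ)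
    (h : ∀ i, i < n → G.Adj (c i) (c (i+1))) :
    (chainWalk G c n h).length = n := by
  induction n with
  | zero => simp [chainWalk]
  | succ n ih => simp [chainWalk, Walk.length_concat, ih]

/-- Hamming graph on `Fin m → Fin 3`. -/
def Ham (m : ℕ) : SimpleGraph (Fin m → Fin 3) where
  Adj f g := ∃ i, f i ≠ g i ∧ ∀ j, j ≠ i → f j = g j
  symm := by
    constructor
    rintro f g ⟨i, hne, hall⟩
    exact ⟨i, hne.symm, fun j hj => (hall j hj).symm⟩
  loopless := by
    constructor
    rintro f ⟨i, hne, -⟩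
    exact hne rfl

instance (m : ℕ) : DecidableRel (Ham m).Adj :=
  fun f g => inferInstanceAs (Decidable (∃ i, f i ≠ g i ∧ ∀ j, j ≠ i → f j = g j))

/-- layered graph realizing `Ham m` as a shortest path graph -/
def LG (m : ℕ) : SimpleGraph (ℕ × Fin 3) where
  Adj u v := (u.1 + 1 = v.1 ∨ v.1 + 1 = u.1)
    ∧ (u.1 = 0 → u.2 = 0) ∧ (v.1 = 0 → v.2 = 0)
    ∧ (m + 1 ≤ u.1 → u = (m+1, 0)) ∧ (m + 1 ≤ v.1 → v = (m+1, 0))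
  symm := by
    constructor
    rintro u v ⟨h1, h2, h3, h4, h5⟩
    exact ⟨h1.symm, h3, h2, h5, h4⟩
  loopless := by
    constructor
    rintro u ⟨h1, -⟩
    omega

def lvert (m : ℕ) (f : Fin m → Fin 3) (i : ℕ) : ℕ × Fin 3 :=
  if h : 1 ≤ i ∧ i ≤ m then (i, f ⟨i-1, by omega⟩) else if i = 0 then (0,0) else (m+1, 0)

theorem lvert_zero (m : ℕ) (f : Fin m → Fin 3) : lvert m f 0 = (0, 0) := by
  simp [lvert]

theorem lvert_top (m : ℕ) (f : Fin m → Fin 3) : lvert m f (m+1) = (m+1, 0) := by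
  have : ¬ (1 ≤ m+1 ∧ m+1 ≤ m) := by omega
  simp [lvert, this]

theorem lvert_fst (m : ℕ) (f : Fin m → Fin 3) (i : ℕ) (hi : i ≤ m+1) :
    (lvert m f i).1 = i := by
  unfold lvert
  split_ifs <;> simp <;> omega

theorem lvert_adj (m : ℕ) (f : Fin m → Fin 3) :
    ∀ i, i < m + 1 → (LG m).Adj (lvert m f i) (lvert m f (i+1)) := by
  intro i hi
  have h0 : (lvert m f i).1 = i := lvert_fst m f i (by omega)
  have h1 : (lvert m f (i+1)).1 = i + 1 := lvert_fst m f (i+1) (by omega)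
  refine ⟨Or.inl (by omega), ?_, ?_, ?_, ?_⟩
  · intro hz
    have : i = 0 := by omega
    subst this
    simp [lvert]
  · intro hz
    omega
  · intro hz
    omega
  · intro hz
    have : i + 1 = m + 1 := by omega
    rw [this]
    exact lvert_top m f

def walkOf (m : ℕ) (f : Fin m → Fin 3) : (LG m).Walk (0,0) (m+1,0) :=
  (chainWalk (LG m) (lvert m f) (m+1) (lvert_adj m f)).copy (lvert_zero m f) (lvert_top m f)

theorem walkOf_support (m : ℕ) (f : Fin m → Fin 3) :
    (walkOf m f).support = (List.range (m+2)).map (lvert m f) := by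
  simp [walkOf, Walk.support_copy, chainWalk_support]

theorem walkOf_length (m : ℕ) (f : Fin m → Fin 3) : (walkOf m f).length = m + 1 := by
  simp [walkOf, Walk.length_copy, chainWalk_length]

theorem walkOf_isPath (m : ℕ) (f : Fin m → Fin 3) : (walkOf m f).IsPath := by
  rw [Walk.isPath_def, walkOf_support]
  refine List.Nodup.map_on ?_ List.nodup_range
  intro i hi j hj hij
  rw [List.mem_range] at hi hj
  have h1 : (lvert m f i).1 = i := lvert_fst m f i (by omega)
  have h2 : (lvert m f j).1 = j := lvert_fst m f j (by omega)
  rw [← h1, ← h2, hij]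

theorem lg_layer_le {m : ℕ} : ∀ {u v : ℕ × Fin 3} (p : (LG m).Walk u v),
    v.1 ≤ u.1 + p.length := by
  intro u v p
  induction p with
  | nil => simp
  | cons h p ih =>
    have : _ := h.1
    simp only [Walk.length_cons]
    omega

theorem lg_dist (m : ℕ) : (LG m).dist (0,0) (m+1,0) = m + 1 := by
  have hr : (LG m).Reachable (0,0) (m+1,0) := ⟨walkOf m (fun _ => 0)⟩
  obtain ⟨p, hp⟩ := hr.exists_walk_length_eq_dist
  have h1 : (LG m).dist (0,0) (m+1,0) ≤ m + 1 := by
    have := SimpleGraph.dist_le (walkOf m (fun _ => 0))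
    rwa [walkOf_length] at this
  have h2 := lg_layer_le p
  simp only at h2
  omega


-- the original decls (Geodesic, DiffAt, SPG) assumed present

theorem support_getD (m : ℕ) (f : Fin m → Fin 3) (i : ℕ) :
    (walkOf m f).support.getD i (0,0) = if i ≤ m + 1 then lvert m f i else (0,0) := by
  rw [walkOf_support]
  rcases lt_or_ge i (m+2) with h | h
  · rw [List.getD_eq_getElem?_getD, List.getElem?_map, List.getElem?_range h,
      if_pos (by omega : i ≤ m+1)]
    simp
  · rw [List.getD_eq_getElem?_getD, List.getElem?_eq_none (by simpa using (by omega : m+2 ≤ i)),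
      if_neg (by omega : ¬ i ≤ m+1)]
    simp

def geo (m : ℕ) (f : Fin m → Fin 3) : Geodesic (LG m) (0,0) (m+1,0) :=
  ⟨walkOf m f, walkOf_isPath m f, by rw [walkOf_length, lg_dist]⟩

theorem geo_inj (m : ℕ) : Function.Injective (geo m) := by
  intro f g h
  funext i
  have := congrArg (fun (U : Geodesic (LG m) (0,0) (m+1,0)) => U.1.support.getD (i.val+1) (0,0)) h
  simp only [geo, support_getD] at this
  have hi : i.val + 1 ≤ m + 1 := by omega
  rw [if_pos hi, if_pos hi] at this
  unfold lvert at this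
  have hc : 1 ≤ i.val + 1 ∧ i.val + 1 ≤ m := by omega
  rw [dif_pos hc, dif_pos hc] at this
  simpa [Fin.ext_iff, Prod.ext_iff] using this

theorem geo_adj (m : ℕ) (f g : Fin m → Fin 3) :
    (SPG (LG m) (0,0) (m+1,0)).Adj (geo m f) (geo m g) ↔ (Ham m).Adj f g := by
  constructor
  · rintro ⟨i, hne, hall⟩
    simp only [geo, support_getD] at hne hall
    by_cases hi : i ≤ m + 1
    · rw [if_pos hi, if_pos hi] at hne
      have h1 : 1 ≤ i ∧ i ≤ m := by
        by_contra hcon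
        apply hne
        unfold lvert
        rw [dif_neg hcon, dif_neg hcon]
      refine ⟨⟨i - 1, by omega⟩, ?_, ?_⟩
      · intro hfg
        apply hne
        unfold lvert
        rw [dif_pos h1, dif_pos h1, hfg]
      · intro j hj
        have hji : (j.val : ℕ) + 1 ≠ i := by
          intro hcon
          apply hj
          apply Fin.ext
          simp
          omega
        have := hall (j.val + 1) hji
        have hjle : j.val + 1 ≤ m + 1 := by omega
        rw [if_pos hjle, if_pos hjle] at this
        unfold lvert at this
        have hc : 1 ≤ j.val + 1 ∧ j.val + 1 ≤ m := by omega
        rw [dif_pos hc, dif_pos hc] at this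
        have : f ⟨j.val, by omega⟩ = g ⟨j.val, by omega⟩ := by
          simpa [Prod.ext_iff] using this
        simpa using this
    · exfalso
      apply hne
      rw [if_neg hi, if_neg hi]
  · rintro ⟨i, hne, hall⟩
    refine ⟨i.val + 1, ?_, ?_⟩
    · simp only [geo, support_getD]
      have hle : i.val + 1 ≤ m + 1 := by omega
      rw [if_pos hle, if_pos hle]
      unfold lvert
      have hc : 1 ≤ i.val + 1 ∧ i.val + 1 ≤ m := by omega
      rw [dif_pos hc, dif_pos hc]
      simp only [Prod.mk.injEq, ne_eq, not_and]
      intro _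
      have heq : (⟨i.val + 1 - 1, by omega⟩ : Fin m) = i := by
        apply Fin.ext; simp
      rw [heq]
      exact hne
    · intro j hj
      simp only [geo, support_getD]
      by_cases hle : j ≤ m + 1
      · rw [if_pos hle, if_pos hle]
        unfold lvert
        by_cases hc : 1 ≤ j ∧ j ≤ m
        · rw [dif_pos hc, dif_pos hc]
          have : (⟨j - 1, by omega⟩ : Fin m) ≠ i := by
            intro hcon
            apply hj
            have := congrArg Fin.val hcon
            simp at this
            omega
          rw [hall _ this]
        · rw [dif_neg hc, dif_neg hc]
      · rw [if_neg hle, if_neg hle]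

/-- Realization: Hamming graphs embed into shortest path graphs. -/
theorem ham_realize (m : ℕ) :
    ∃ (V : Type) (G : SimpleGraph V) (a b : V), a ≠ b ∧
      Nonempty (Ham m ↪g SPG G a b) := by
  refine ⟨ℕ × Fin 3, LG m, (0,0), (m+1,0), by simp [Prod.ext_iff], ⟨⟨⟨geo m, geo_inj m⟩, ?_⟩⟩⟩
  intro f g
  exact geo_adj m f g
-- base cases
def w3 : Fin 3 → (Fin 1 → Fin 3) := ![![0], ![1], ![2]]
def w4 : Fin 4 → (Fin 2 → Fin 3) := ![![0,0], ![1,0], ![1,1], ![0,1]]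
def w7 : Fin 7 → (Fin 3 → Fin 3) :=
  ![![0,0,0], ![1,0,0], ![1,1,0], ![2,1,0], ![2,1,1], ![0,1,1], ![0,0,1]]

def emb3 : cycleGraph 3 ↪g Ham 1 :=
  ⟨⟨w3, by decide⟩, by decide⟩

def emb4 : cycleGraph 4 ↪g Ham 2 :=
  ⟨⟨w4, by decide⟩, by decide⟩

def emb7 : cycleGraph 7 ↪g Ham 3 :=
  ⟨⟨w7, by decide⟩, by decide⟩
theorem mod_eq_one_iff {n x y : ℕ} (hn : 2 ≤ n) (hx : x < n) (hy : y < n) :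
    ((n - y) + x) % n = 1 ↔ (y + 1 = x ∨ (x = 0 ∧ y = n - 1)) := by
  rcases lt_or_ge ((n - y) + x) n with h | h
  · rw [Nat.mod_eq_of_lt h]; omega
  · rw [Nat.mod_eq_sub_mod h, Nat.mod_eq_of_lt (by omega)]; omega

theorem cyc_adj_nat {n : ℕ} (hn : 2 ≤ n) (u v : Fin n) :
    (cycleGraph n).Adj u v ↔
      (u.val + 1 = v.val ∨ v.val + 1 = u.val ∨
        (u.val = 0 ∧ v.val = n - 1) ∨ (v.val = 0 ∧ u.val = n - 1)) := by
  rw [cycleGraph_adj', Fin.coe_sub, Fin.coe_sub,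
    mod_eq_one_iff hn u.isLt v.isLt, mod_eq_one_iff hn v.isLt u.isLt]
  omega
theorem ham_snoc_same {m : ℕ} (u v : Fin m → Fin 3) (c : Fin 3) :
    (Ham (m+1)).Adj (Fin.snoc u c) (Fin.snoc v c) ↔ (Ham m).Adj u v := by
  constructor
  · rintro ⟨i, hne, hall⟩
    induction i using Fin.lastCases with
    | last => simp [Fin.snoc_last] at hne
    | cast i =>
      refine ⟨i, by simpa [Fin.snoc_castSucc] using hne, fun j hj => ?_⟩
      have := hall (Fin.castSucc j) (by simpa [Fin.castSucc_inj] using hj)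
      simpa [Fin.snoc_castSucc] using this
  · rintro ⟨i, hne, hall⟩
    refine ⟨Fin.castSucc i, by simpa [Fin.snoc_castSucc] using hne, fun j hj => ?_⟩
    induction j using Fin.lastCases with
    | last => simp [Fin.snoc_last]
    | cast j =>
      have : j ≠ i := by simpa [Fin.castSucc_inj] using hj
      simp [Fin.snoc_castSucc, hall j this]

theorem ham_snoc_ne {m : ℕ} (u v : Fin m → Fin 3) (c d : Fin 3) (hcd : c ≠ d) :
    (Ham (m+1)).Adj (Fin.snoc u c) (Fin.snoc v d) ↔ u = v := by
  constructor
  · rintro ⟨i, hne, hall⟩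
    induction i using Fin.lastCases with
    | last =>
      funext j
      have := hall (Fin.castSucc j) (Fin.ne_of_lt (Fin.castSucc_lt_last j))
      simpa [Fin.snoc_castSucc] using this
    | cast i =>
      exfalso
      have := hall (Fin.last m) (by
        intro hcon
        exact absurd hcon.symm (Fin.ne_of_lt (Fin.castSucc_lt_last i)))
      simp [Fin.snoc_last] at this
      exact hcd this
  · rintro rfl
    refine ⟨Fin.last m, by simpa [Fin.snoc_last] using hcd, fun j hj => ?_⟩
    induction j using Fin.lastCases with
    | last => exact absurd rfl hj
    | cast j => simp [Fin.snoc_castSucc]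

def iota {k : ℕ} (hk : 4 ≤ k) (t : Fin (k+2)) : Fin k :=
  ⟨if t.val = 0 then 0 else if t.val ≤ 3 then t.val - 1 else t.val - 2, by
    have := t.isLt; split_ifs <;> omega⟩

def flg {k : ℕ} (t : Fin (k+2)) : Fin 3 := if 1 ≤ t.val ∧ t.val ≤ 3 then 1 else 0

theorem flg_eq_iff {k : ℕ} (s t : Fin (k+2)) :
    (flg s = flg t) ↔ ((if 1 ≤ s.val ∧ s.val ≤ 3 then (1:ℕ) else 0) =
      (if 1 ≤ t.val ∧ t.val ≤ 3 then (1:ℕ) else 0)) := by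
  unfold flg
  split_ifs with h1 h2 h2 <;> simp [Fin.ext_iff]

theorem index_corr {k : ℕ} (hk : 4 ≤ k) (s t : Fin (k+2)) :
    ((flg s = flg t ∧ (cycleGraph k).Adj (iota hk s) (iota hk t)) ∨
      (flg s ≠ flg t ∧ iota hk s = iota hk t)) ↔ (cycleGraph (k+2)).Adj s t := by
  have hs := s.isLt
  have ht := t.isLt
  rw [cyc_adj_nat (by omega : 2 ≤ k + 2) s t,
    cyc_adj_nat (by omega : 2 ≤ k) (iota hk s) (iota hk t)]
  simp only [ne_eq, flg_eq_iff]
  simp only [Fin.ext_iff, iota]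
  split_ifs <;>
    first
      | omega
      | (simp only [false_and, true_and, and_false, and_true, false_or, or_false,
          not_false_eq_true, not_true, true_or, or_true]
         omega)
theorem step2 {k m : ℕ} (hk : 4 ≤ k) (e : cycleGraph k ↪g Ham m) :
    Nonempty (cycleGraph (k+2) ↪g Ham (m+1)) := by
  refine ⟨⟨⟨fun t => Fin.snoc (e (iota hk t)) (flg t), ?_⟩, ?_⟩⟩
  · intro s t h
    have hflag : flg s = flg t := by
      have := congrFun h (Fin.last m)
      simpa [Fin.snoc_last] using this
    have hval : e (iota hk s) = e (iota hk t) := by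
      funext j
      have := congrFun h (Fin.castSucc j)
      simpa [Fin.snoc_castSucc] using this
    have hi : iota hk s = iota hk t := e.injective hval
    have hs := s.isLt
    have ht := t.isLt
    rw [flg_eq_iff] at hflag
    rw [Fin.ext_iff] at hi
    simp only [iota] at hi
    apply Fin.ext
    split_ifs at hflag hi <;> omega
  · intro s t
    show (Ham (m+1)).Adj (Fin.snoc (e (iota hk s)) (flg s)) (Fin.snoc (e (iota hk t)) (flg t)) ↔ _
    rw [show ((cycleGraph (k+2)).Adj s t ↔ _) from (index_corr hk s t).symm]
    by_cases hf : flg s = flg t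
    · rw [hf, ham_snoc_same, e.map_rel_iff]
      simp [hf]
    · rw [ham_snoc_ne _ _ _ _ hf, e.injective.eq_iff]
      simp [hf]

theorem exists_emb : ∀ k, 3 ≤ k → k ≠ 5 → ∃ m, Nonempty (cycleGraph k ↪g Ham m) := by
  intro k
  induction k using Nat.strong_induction_on with
  | _ k ih =>
    intro h3 h5
    by_cases h8 : k < 8
    · interval_cases k
      · exact ⟨1, ⟨emb3⟩⟩
      · exact ⟨2, ⟨emb4⟩⟩
      · exact absurd rfl h5
      · obtain ⟨e⟩ := step2 (le_refl 4) emb4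
        exact ⟨3, ⟨e⟩⟩
      · exact ⟨3, ⟨emb7⟩⟩
    · obtain ⟨m, ⟨e⟩⟩ := ih (k-2) (by omega) (by omega) (by omega)
      obtain ⟨e'⟩ := step2 (show 4 ≤ k - 2 by omega) e
      have hkk : k - 2 + 2 = k := by omega
      rw [← hkk]
      exact ⟨m+1, ⟨e'⟩⟩

theorem exists_spg (k : ℕ) (h3 : 3 ≤ k) (h5 : k ≠ 5) :
    ∃ (V : Type) (G : SimpleGraph V) (a b : V), a ≠ b ∧
      Nonempty (cycleGraph k ↪g SPG G a b) := by
  obtain ⟨m, ⟨e⟩⟩ := exists_emb k h3 h5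
  obtain ⟨V, G, a, b, hab, ⟨f⟩⟩ := ham_realize m
  exact ⟨V, G, a, b, hab, ⟨f.comp e⟩⟩
theorem no_c5 : ¬ ∃ (V : Type) (G : SimpleGraph V) (a b : V), a ≠ b ∧
    Nonempty (cycleGraph 5 ↪g SPG G a b) := by
  rintro ⟨V, G, a, b, hab, ⟨e⟩⟩
  classical
  let F : Fin 5 → ℕ → V := fun t i => (e t).1.support.getD i a
  have hFinj : Function.Injective F := by
    intro s t h
    have hsup : (e s).1.support = (e t).1.support := by
      apply List.ext_getElem
      · rw [Walk.length_support, Walk.length_support, (e s).2.2, (e t).2.2]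
      · intro n h1 h2
        have hn := congrFun h n
        simp only [F] at hn
        rw [List.getD_eq_getElem?_getD, List.getD_eq_getElem?_getD,
          List.getElem?_eq_getElem h1, List.getElem?_eq_getElem h2] at hn
        simpa using hn
    exact e.injective (Subtype.ext (walk_support_inj _ _ hsup))
  have hadj : ∀ t : Fin 5, (SPG G a b).Adj (e t) (e (t+1)) := by
    intro t
    apply e.map_rel_iff.mpr
    revert t; decide
  have hd : ∀ t : Fin 5, ∃ i, F t i ≠ F (t+1) i ∧ ∀ j, j ≠ i → F t j = F (t+1) j :=
    fun t => hadj t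
  choose d hd1 hd2 using hd
  have hrep : ∀ t : Fin 5, ∃ s, s ≠ t ∧ d s = d t := by
    intro t
    by_contra hcon
    push_neg at hcon
    have key : ∀ u : Fin 5, u ≠ t → F u (d t) = F (u+1) (d t) := by
      intro u hu
      exact hd2 u (d t) (fun h2 => hcon u hu h2.symm)
    have c1 := key (t+1) ((by decide : ∀ x : Fin 5, x+1 ≠ x) t)
    have c2 := key (t+1+1) ((by decide : ∀ x : Fin 5, x+1+1 ≠ x) t)
    have c3 := key (t+1+1+1) ((by decide : ∀ x : Fin 5, x+1+1+1 ≠ x) t)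
    have c4 := key (t+1+1+1+1) ((by decide : ∀ x : Fin 5, x+1+1+1+1 ≠ x) t)
    have hcyc : t+1+1+1+1+1 = t := (by decide : ∀ x : Fin 5, x+1+1+1+1+1 = x) t
    have : F (t+1) (d t) = F t (d t) := by
      rw [c1, c2, c3, c4, hcyc]
    exact hd1 t this.symm
  have hpair : ∃ t : Fin 5, d t = d (t+1) := by
    by_contra hcon
    push_neg at hcon
    have hA : ∀ t : Fin 5, d (t+2) = d t ∨ d (t+3) = d t := by
      intro t
      obtain ⟨s, hst, hds⟩ := hrep t
      have h1 : s ≠ t + 1 := by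
        rintro rfl
        exact hcon t hds.symm
      have h4 : s ≠ t + 4 := by
        rintro rfl
        have ht5 : t + 4 + 1 = t := (by decide : ∀ x : Fin 5, x+4+1 = x) t
        apply hcon (t+4)
        rw [ht5]
        exact hds
      have hfin : ∀ t s : Fin 5, s ≠ t → s ≠ t+1 → s ≠ t+4 → s = t+2 ∨ s = t+3 := by
        decide
      have : s = t + 2 ∨ s = t + 3 := hfin t s hst h1 h4
      rcases this with rfl | rfl
      · exact Or.inl hds
      · exact Or.inr hds
    have h0 := hA 0; have h1 := hA 1; have h2 := hA 2; have h3 := hA 3; have h4 := hA 4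
    have n0 := hcon 0; have n1 := hcon 1; have n2 := hcon 2; have n3 := hcon 3
    have n4 := hcon 4
    simp only [show (0:Fin 5)+2=2 by decide, show (0:Fin 5)+3=3 by decide,
      show (1:Fin 5)+2=3 by decide, show (1:Fin 5)+3=4 by decide,
      show (2:Fin 5)+2=4 by decide, show (2:Fin 5)+3=0 by decide,
      show (3:Fin 5)+2=0 by decide, show (3:Fin 5)+3=1 by decide,
      show (4:Fin 5)+2=1 by decide, show (4:Fin 5)+3=2 by decide,
      show (0:Fin 5)+1=1 by decide, show (1:Fin 5)+1=2 by decide,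
      show (2:Fin 5)+1=3 by decide, show (3:Fin 5)+1=4 by decide,
      show (4:Fin 5)+1=0 by decide] at h0 h1 h2 h3 h4 n0 n1 n2 n3 n4
    omega
  obtain ⟨t, ht⟩ := hpair
  have agree : ∀ j, j ≠ d t → F t j = F (t+1+1) j := by
    intro j hj
    rw [hd2 t j hj]
    apply hd2 (t+1) j
    rw [← ht]
    exact hj
  by_cases heq : F t (d t) = F (t+1+1) (d t)
  · have hFeq : F t = F (t+1+1) := by
      funext j
      by_cases hj : j = d t
      · rw [hj]; exact heq
      · exact agree j hj
    have := hFinj hFeq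
    exact (by decide : ∀ x : Fin 5, x ≠ x+1+1) t this
  · have hDiff : (SPG G a b).Adj (e t) (e (t+1+1)) := ⟨d t, heq, fun j hj => agree j hj⟩
    have := e.map_rel_iff.mp hDiff
    exact (by decide : ∀ x : Fin 5, ¬(cycleGraph 5).Adj x (x+1+1)) t this

theorem stmt16 (k : ℕ) (hk : 3 ≤ k) :
    (∃ (V : Type) (G : SimpleGraph V) (a b : V), a ≠ b ∧
      Nonempty (cycleGraph k ↪g SPG G a b)) ↔ k ≠ 5 := by
  constructor
  · intro h hk5
    subst hk5
    exact no_c5 h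
  · intro h5
    exact exists_spg k hk h5
end

section
/- The shortest path graph of the two-dimensional grid P_{n_1} □ P_{n_2} between the diametric corner vertices (0,0) and (n_1,n_2) is isomorphic to the staircase graph S_{n_1,n_2}, the induced subgraph of the integer lattice graph Z^{n_2} on vertex set {(a_1,…,a_{n_2}) ∈ Z^{n_2} : n_1 ≥ a_1 ≥ a_2 ≥ ⋯ ≥ a_{n_2} ≥ 0}. -/
open SimpleGraph Finset


/-- The integer lattice graph `ℤ^m`: two points are adjacent iff their L¹-distance is 1. -/
def latticeGraph (m : ℕ) : SimpleGraph (Fin m → ℤ) where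
  Adj x y := ∃ i, (x i - y i).natAbs = 1 ∧ ∀ j, j ≠ i → x j = y j
  symm := by
    constructor
    rintro x y ⟨i, h1, h2⟩
    refine ⟨i, ?_, fun j hj => (h2 j hj).symm⟩
    rw [← Int.natAbs_neg]; simpa using h1
  loopless := by
    constructor
    rintro x ⟨i, h1, -⟩
    simp at h1


namespace Stmt18
variable {V : Type*} {G : SimpleGraph V}

def walkOfFn (G : SimpleGraph V) (g : ℕ → V) :
    ∀ (L : ℕ), (∀ t, t < L → G.Adj (g t) (g (t+1))) → G.Walk (g 0) (g L)
  | 0, _ => Walk.nil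
  | (L+1), h =>
      (walkOfFn G g L fun t ht => h t (ht.trans L.lt_succ_self)).concat (h L L.lt_succ_self)

lemma support_walkOfFn (g : ℕ → V) (L : ℕ) (h) :
    (walkOfFn G g L h).support = (List.range (L+1)).map g := by
  induction L with
  | zero => simp [walkOfFn, List.range_succ]
  | succ L ih => rw [walkOfFn, Walk.support_concat, ih]; simp [List.range_succ]

lemma length_walkOfFn (g : ℕ → V) (L : ℕ) (h) : (walkOfFn G g L h).length = L := by
  induction L with
  | zero => rfl
  | succ L ih => rw [walkOfFn, Walk.length_concat, ih]

lemma walk_eq_of_support_eq {a b : V} (p : G.Walk a b) :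
    ∀ (q : G.Walk a b), p.support = q.support → p = q := by
  induction p with
  | nil =>
    intro q hq
    cases q with
    | nil => rfl
    | cons h' q' =>
      rw [Walk.support_nil, Walk.support_cons] at hq
      exact absurd (List.tail_eq_of_cons_eq hq).symm q'.support_ne_nil
  | cons h p ih =>
    intro q hq
    cases q with
    | nil =>
      rw [Walk.support_nil, Walk.support_cons] at hq
      exact absurd (List.tail_eq_of_cons_eq hq) p.support_ne_nil
    | cons h' q' =>
      rw [Walk.support_cons, Walk.support_cons] at hq
      have h2 : p.support = q'.support := List.tail_eq_of_cons_eq hq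
      have hc := h2
      rw [p.support_eq_cons, q'.support_eq_cons] at hc
      obtain ⟨hc, -⟩ := List.cons_eq_cons.mp hc
      subst hc
      rw [ih q' h2]

lemma support_eq_map_getVert {a b : V} (p : G.Walk a b) :
    p.support = (List.range (p.length + 1)).map p.getVert := by
  induction p with
  | nil => simp [List.range_succ]
  | cons h p ih =>
    rw [Walk.support_cons, ih, Walk.length_cons, @List.range_succ_eq_map (p.length + 1)]
    simp only [List.map_cons, List.map_map]
    congr 1


section Grid

def Yc (n₂ : ℕ) (v : Fin n₂ → ℕ) (t : ℕ) : ℕ := (univ.filter fun i => v i < t).card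

variable {n₁ n₂ : ℕ} {v : Fin n₂ → ℕ}

lemma Yc_le_n (t : ℕ) : Yc n₂ v t ≤ n₂ := by
  simpa [Yc] using card_filter_le univ fun i => v i < t

lemma Yc_zero : Yc n₂ v 0 = 0 := by simp [Yc]

lemma Yc_lt_char (hv : StrictMono v) {i : Fin n₂} {t : ℕ} :
    v i < t ↔ (i : ℕ) < Yc n₂ v t := by
  constructor
  · intro h
    have hsub : Iic i ⊆ univ.filter fun j => v j < t := by
      intro j hj
      rw [mem_Iic] at hj
      simp only [mem_filter, mem_univ, true_and]
      exact lt_of_le_of_lt (hv.monotone hj) h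
    have := card_le_card hsub
    rw [Fin.card_Iic] at this
    unfold Yc; omega
  · intro h
    by_contra hvi
    push_neg at hvi
    have hsub : (univ.filter fun j => v j < t) ⊆ Iio i := by
      intro j hj
      simp only [mem_filter, mem_univ, true_and] at hj
      rw [mem_Iio]
      exact hv.lt_iff_lt.mp (lt_of_lt_of_le hj hvi)
    have := card_le_card hsub
    rw [Fin.card_Iio] at this
    unfold Yc at h; omega

lemma Yc_stab (hb : ∀ i, v i < n₁ + n₂) {t : ℕ} (ht : n₁ + n₂ ≤ t) :
    Yc n₂ v t = n₂ := by
  unfold Yc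
  rw [filter_true_of_mem fun i _ => lt_of_lt_of_le (hb i) ht]
  simp

lemma Yc_le_t (hv : Function.Injective v) (t : ℕ) : Yc n₂ v t ≤ t := by
  unfold Yc
  have h := card_le_card_of_injOn (s := univ.filter fun i => v i < t) (t := range t) v
    (fun i hi => by
      simp at hi
      exact mem_range.mpr hi)
    (fun a _ b _ hab => hv hab)
  exact le_trans h (le_of_eq (card_range t))

lemma Yc_step (hv : Function.Injective v) (t : ℕ) :
    Yc n₂ v (t+1) = Yc n₂ v t ∨ Yc n₂ v (t+1) = Yc n₂ v t + 1 := by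
  have hsplit : (univ.filter fun i => v i < t + 1)
      = (univ.filter fun i => v i < t) ∪ (univ.filter fun i => v i = t) := by
    rw [← filter_or]
    apply filter_congr
    intro i _
    simp [Nat.lt_succ_iff_lt_or_eq, Nat.le_iff_lt_or_eq]
  have hdisj : Disjoint (univ.filter fun i => v i < t) (univ.filter fun i => v i = t) := by
    rw [disjoint_filter]
    intro i _ h1 h2
    omega
  have hcard : (univ.filter fun i => v i = t).card ≤ 1 := by
    apply card_le_one.mpr
    intro a ha b hb
    simp only [mem_filter, mem_univ, true_and] at ha hb
    exact hv (ha.trans hb.symm)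
  unfold Yc
  rw [hsplit, card_union_of_disjoint hdisj]
  omega

lemma Yc_mono (s t : ℕ) (hst : s ≤ t) : Yc n₂ v s ≤ Yc n₂ v t := by
  apply card_le_card
  intro i hi
  simp only [mem_filter, mem_univ, true_and] at hi ⊢
  omega

lemma smono_gap (hv : StrictMono v) :
    ∀ (d : ℕ) (i : Fin n₂) (h : (i : ℕ) + d < n₂), v i + d ≤ v ⟨(i : ℕ) + d, h⟩ := by
  intro d
  induction d with
  | zero => intro i h; simp
  | succ d ih =>
    intro i h
    have h' : (i : ℕ) + d < n₂ := by omega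
    have h1 := ih i h'
    have h2 : v ⟨(i : ℕ) + d, h'⟩ < v ⟨(i : ℕ) + (d + 1), h⟩ := hv (by simp [Fin.lt_def])
    omega

lemma v_le (hv : StrictMono v) (hb : ∀ i, v i < n₁ + n₂) (i : Fin n₂) :
    v i ≤ n₁ + (i : ℕ) := by
  have hd : (i : ℕ) + (n₂ - 1 - (i : ℕ)) < n₂ := by omega
  have h1 := smono_gap hv (n₂ - 1 - (i : ℕ)) i hd
  have h2 := hb ⟨(i : ℕ) + (n₂ - 1 - (i : ℕ)), hd⟩
  have h3 : (i : ℕ) < n₂ := i.isLt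
  omega

lemma x_le (hv : StrictMono v) (hb : ∀ i, v i < n₁ + n₂) {t : ℕ} (ht : t ≤ n₁ + n₂) :
    t - Yc n₂ v t ≤ n₁ := by
  by_contra h
  push_neg at h
  have h1 : Yc n₂ v t ≤ t := Yc_le_t hv.injective t
  have hi : t - n₁ - 1 < n₂ := by omega
  have h2 := v_le hv hb ⟨t - n₁ - 1, hi⟩
  simp only [Fin.val_mk] at h2
  have h3 := (Yc_lt_char hv (i := ⟨t - n₁ - 1, hi⟩) (t := t)).mp (by omega)
  simp only [Fin.val_mk] at h3
  omega

def gfun (n₁ : ℕ) {n₂ : ℕ} (v : Fin n₂ → ℕ) (t : ℕ) : Fin (n₁+1) × Fin (n₂+1) :=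
  (⟨min (t - Yc n₂ v t) n₁, by omega⟩, ⟨min (Yc n₂ v t) n₂, by omega⟩)

lemma gfun_zero : gfun n₁ v 0 = (0, 0) := by
  have h0 : Yc n₂ v 0 = 0 := Yc_zero
  refine Prod.ext (Fin.ext ?_) (Fin.ext ?_) <;> simp [gfun, h0]

lemma gfun_last (hb : ∀ i, v i < n₁ + n₂) :
    gfun n₁ v (n₁ + n₂) = (Fin.last n₁, Fin.last n₂) := by
  have h0 : Yc n₂ v (n₁ + n₂) = n₂ := Yc_stab hb le_rfl
  refine Prod.ext (Fin.ext ?_) (Fin.ext ?_) <;> simp [gfun, h0, Fin.last]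

lemma gfun_adj (hv : StrictMono v) (hb : ∀ i, v i < n₁ + n₂) {t : ℕ} (ht : t < n₁ + n₂) :
    (pathGraph (n₁+1) □ pathGraph (n₂+1)).Adj (gfun n₁ v t) (gfun n₁ v (t+1)) := by
  have hx1 : t - Yc n₂ v t ≤ n₁ := x_le hv hb (le_of_lt ht)
  have hx2 : t + 1 - Yc n₂ v (t+1) ≤ n₁ := x_le hv hb ht
  have hA : Yc n₂ v t ≤ t := Yc_le_t hv.injective t
  have hy1 : Yc n₂ v t ≤ n₂ := Yc_le_n t
  have hy2 : Yc n₂ v (t+1) ≤ n₂ := Yc_le_n (t+1)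
  rw [boxProd_adj]
  rcases Yc_step hv.injective t with hs | hs
  · left
    constructor
    · rw [pathGraph_adj]
      left
      simp only [gfun, Fin.val_mk]
      omega
    · refine Fin.ext ?_
      simp only [gfun, Fin.val_mk]
      omega
  · right
    constructor
    · rw [pathGraph_adj]
      left
      simp only [gfun, Fin.val_mk]
      omega
    · refine Fin.ext ?_
      simp only [gfun, Fin.val_mk]
      omega

lemma gfun_inj (hv : StrictMono v) (hb : ∀ i, v i < n₁ + n₂) {s t : ℕ}
    (hs : s ≤ n₁ + n₂) (ht : t ≤ n₁ + n₂) (h : gfun n₁ v s = gfun n₁ v t) : s = t := by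
  have h1 : Yc n₂ v s ≤ s := Yc_le_t hv.injective s
  have h2 : Yc n₂ v t ≤ t := Yc_le_t hv.injective t
  have h3 : s - Yc n₂ v s ≤ n₁ := x_le hv hb hs
  have h4 : t - Yc n₂ v t ≤ n₁ := x_le hv hb ht
  have hx := congrArg (fun p => ((p.1 : Fin (n₁+1)) : ℕ)) h
  have hy := congrArg (fun p => ((p.2 : Fin (n₂+1)) : ℕ)) h
  simp only [gfun, Fin.val_mk] at hx hy
  have h5 : Yc n₂ v s ≤ n₂ := Yc_le_n s
  have h6 : Yc n₂ v t ≤ n₂ := Yc_le_n t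
  omega

end Grid

section Geo
variable (n₁ n₂ : ℕ)

abbrev Vt (n₁ n₂ : ℕ) := {v : Fin n₂ → ℕ // StrictMono v ∧ ∀ i, v i < n₁ + n₂}

def GW (w : Vt n₁ n₂) :
    (pathGraph (n₁+1) □ pathGraph (n₂+1)).Walk (0,0) (Fin.last n₁, Fin.last n₂) :=
  (walkOfFn _ (gfun n₁ w.1) (n₁+n₂) fun _ ht => gfun_adj w.2.1 w.2.2 ht).copy
    gfun_zero (gfun_last w.2.2)

lemma GW_support (w : Vt n₁ n₂) :
    (GW n₁ n₂ w).support = (List.range (n₁+n₂+1)).map (gfun n₁ w.1) := by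
  rw [GW, Walk.support_copy, support_walkOfFn]

lemma GW_length (w : Vt n₁ n₂) : (GW n₁ n₂ w).length = n₁ + n₂ := by
  rw [GW, Walk.length_copy, length_walkOfFn]

lemma rank_le_length {a b : Fin (n₁+1) × Fin (n₂+1)}
    (p : (pathGraph (n₁+1) □ pathGraph (n₂+1)).Walk a b) :
    (b.1 : ℕ) + (b.2 : ℕ) ≤ (a.1 : ℕ) + (a.2 : ℕ) + p.length := by
  induction p with
  | nil => simp
  | cons h p ih =>
    rw [Walk.length_cons]
    rcases boxProd_adj.mp h with ⟨h1, h2⟩ | ⟨h1, h2⟩ <;>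
      rw [pathGraph_adj] at h1 <;>
      have h3 := congrArg Fin.val h2 <;>
      omega

def v₀ : Vt n₁ n₂ :=
  ⟨fun i => (i : ℕ), fun _ _ h => h, fun i => lt_of_lt_of_le i.isLt (by omega)⟩

lemma grid_dist :
    (pathGraph (n₁+1) □ pathGraph (n₂+1)).dist (0,0) (Fin.last n₁, Fin.last n₂)
      = n₁ + n₂ := by
  apply le_antisymm
  · exact le_trans (SimpleGraph.dist_le (GW n₁ n₂ (v₀ n₁ n₂))) (le_of_eq (GW_length n₁ n₂ _))
  · obtain ⟨p, hp⟩ := SimpleGraph.Reachable.exists_walk_length_eq_dist ⟨GW n₁ n₂ (v₀ n₁ n₂)⟩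
    have h1 := rank_le_length n₁ n₂ p
    simp at h1
    rw [← hp]
    omega

def toGeo (w : Vt n₁ n₂) :
    Geodesic (pathGraph (n₁+1) □ pathGraph (n₂+1)) (0,0) (Fin.last n₁, Fin.last n₂) := by
  refine ⟨GW n₁ n₂ w, Walk.IsPath.mk' ?_, by rw [GW_length, grid_dist]⟩
  rw [GW_support]
  apply List.Nodup.map_on _ List.nodup_range
  intro s hs t ht hg
  rw [List.mem_range] at hs ht
  exact gfun_inj w.2.1 w.2.2 (by omega) (by omega) hg

lemma getD_map_range {α : Type*} (g : ℕ → α) (L : ℕ) (d : α) (j : ℕ) :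
    ((List.range L).map g).getD j d = if j < L then g j else d := by
  split
  · next h =>
    rw [List.getD_eq_getElem _ _ (by simpa using h)]
    simp
  · next h =>
    exact List.getD_eq_default _ _ (by simpa using Nat.le_of_not_lt h)

lemma v_eq_of_Yc_eq {n₂ : ℕ} {v v' : Fin n₂ → ℕ} (hv : StrictMono v) (hv' : StrictMono v')
    (h : ∀ t, Yc n₂ v t = Yc n₂ v' t) : v = v' := by
  funext i
  have h1 : v i < v i + 1 := Nat.lt_succ_self _
  have h2 : v' i < v' i + 1 := Nat.lt_succ_self _
  have h3 := (Yc_lt_char hv').mp h2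
  rw [← h _] at h3
  have h4 := (Yc_lt_char hv).mpr h3
  have h5 := (Yc_lt_char hv).mp h1
  rw [h _] at h5
  have h6 := (Yc_lt_char hv').mpr h5
  omega

lemma toGeo_inj : Function.Injective (toGeo n₁ n₂) := by
  intro w w' h
  have hsupp : (GW n₁ n₂ w).support = (GW n₁ n₂ w').support := by
    rw [show GW n₁ n₂ w = (toGeo n₁ n₂ w).1 from rfl,
      show GW n₁ n₂ w' = (toGeo n₁ n₂ w').1 from rfl, h]
  rw [GW_support, GW_support] at hsupp
  have hg : ∀ t, t ≤ n₁ + n₂ → gfun n₁ w.1 t = gfun n₁ w'.1 t := by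
    intro t ht
    have := congrArg (fun l => l.getD t ((0 : Fin (n₁+1)), (0 : Fin (n₂+1)))) hsupp
    simpa [getD_map_range, Nat.lt_succ_of_le ht] using this
  have hyc : ∀ t, Yc n₂ w.1 t = Yc n₂ w'.1 t := by
    intro t
    rcases le_or_gt t (n₁ + n₂) with ht | ht
    · have := congrArg (fun p => ((p.2 : Fin (n₂+1)) : ℕ)) (hg t ht)
      simp only [gfun, Fin.val_mk] at this
      have e1 : Yc n₂ w.1 t ≤ n₂ := Yc_le_n t
      have e2 : Yc n₂ w'.1 t ≤ n₂ := Yc_le_n t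
      omega
    · rw [Yc_stab w.2.2 (le_of_lt ht), Yc_stab w'.2.2 (le_of_lt ht)]
  exact Subtype.ext (v_eq_of_Yc_eq w.2.1 w'.2.1 hyc)

end Geo

section Surj
variable {n₁ n₂ : ℕ}
  (p : (pathGraph (n₁+1) □ pathGraph (n₂+1)).Walk (0,0) (Fin.last n₁, Fin.last n₂))

def xpF (t : ℕ) : ℕ := ((p.getVert t).1 : ℕ)
def ypF (t : ℕ) : ℕ := ((p.getVert t).2 : ℕ)

lemma xp_le (t : ℕ) : xpF p t ≤ n₁ := Nat.lt_succ_iff.mp (p.getVert t).1.isLt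
lemma yp_le (t : ℕ) : ypF p t ≤ n₂ := Nat.lt_succ_iff.mp (p.getVert t).2.isLt

lemma xp_zero : xpF p 0 = 0 := by simp [xpF]
lemma yp_zero : ypF p 0 = 0 := by simp [ypF]

variable (hlen : p.length = n₁ + n₂)
include hlen

lemma xp_stab {t : ℕ} (ht : n₁ + n₂ ≤ t) : xpF p t = n₁ := by
  have h := Walk.getVert_of_length_le p (i := t) (by omega)
  simp [xpF, h]

lemma yp_stab {t : ℕ} (ht : n₁ + n₂ ≤ t) : ypF p t = n₂ := by
  have h := Walk.getVert_of_length_le p (i := t) (by omega)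
  simp [ypF, h]

lemma step_bound {t : ℕ} (ht : t < n₁ + n₂) :
    (xpF p (t+1) + ypF p (t+1) ≤ xpF p t + ypF p t + 1) ∧
      (xpF p t + ypF p t ≤ xpF p (t+1) + ypF p (t+1) + 1) := by
  have hA := p.adj_getVert_succ (i := t) (by omega)
  rcases boxProd_adj.mp hA with ⟨h1, h2⟩ | ⟨h1, h2⟩ <;>
    rw [pathGraph_adj] at h1 <;>
    have h3 := congrArg Fin.val h2 <;>
    unfold xpF ypF <;>
    omega

lemma rk_ub : ∀ t, t ≤ n₁ + n₂ → xpF p t + ypF p t ≤ t := by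
  intro t
  induction t with
  | zero => intro _; rw [xp_zero, yp_zero]
  | succ t ih =>
    intro ht
    have h1 := (step_bound p hlen (t := t) (by omega)).1
    have h2 := ih (by omega)
    omega

lemma rk_lb : ∀ k, k ≤ n₁ + n₂ →
    n₁ + n₂ - k ≤ xpF p (n₁ + n₂ - k) + ypF p (n₁ + n₂ - k) := by
  intro k
  induction k with
  | zero =>
    intro _
    rw [Nat.sub_zero, xp_stab p hlen le_rfl, yp_stab p hlen le_rfl]
  | succ k ih =>
    intro hk
    have h1 := ih (by omega)
    have h2 := (step_bound p hlen (t := n₁ + n₂ - (k+1)) (by omega)).1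
    have h3 : n₁ + n₂ - (k+1) + 1 = n₁ + n₂ - k := by omega
    rw [h3] at h2
    omega

lemma rk_eq {t : ℕ} (ht : t ≤ n₁ + n₂) : xpF p t + ypF p t = t := by
  have h1 := rk_ub p hlen t ht
  have h2 := rk_lb p hlen (n₁ + n₂ - t) (by omega)
  rw [show n₁ + n₂ - (n₁ + n₂ - t) = t by omega] at h2
  omega

lemma yp_step (t : ℕ) :
    ypF p t ≤ ypF p (t+1) ∧ ypF p (t+1) ≤ ypF p t + 1 := by
  rcases lt_or_ge t (n₁ + n₂) with ht | ht
  · have hA := p.adj_getVert_succ (i := t) (by omega)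
    have hr1 := rk_eq p hlen (t := t) (by omega)
    have hr2 := rk_eq p hlen (t := t+1) (by omega)
    rcases boxProd_adj.mp hA with ⟨h1, h2⟩ | ⟨h1, h2⟩ <;>
      rw [pathGraph_adj] at h1 <;>
      have h3 := congrArg Fin.val h2 <;>
      unfold xpF ypF at * <;>
      omega
  · rw [yp_stab p hlen ht, yp_stab p hlen (by omega)]
    omega

lemma yp_mono : Monotone (ypF p) :=
  monotone_nat_of_le_succ fun t => (yp_step p hlen t).1

end Surj

section Surj2
variable {n₁ n₂ : ℕ}

lemma card_filter_val_lt {k : ℕ} (hk : k ≤ n₂) :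
    (univ.filter fun i : Fin n₂ => (i : ℕ) < k).card = k := by
  rcases eq_or_lt_of_le hk with h | h
  · subst h
    rw [filter_true_of_mem fun i _ => i.isLt]
    simp
  · have : (univ.filter fun i : Fin n₂ => (i : ℕ) < k) = Iio ⟨k, h⟩ := by
      ext j
      simp [Fin.lt_def]
    rw [this, Fin.card_Iio]

lemma toGeo_surj : Function.Surjective (toGeo n₁ n₂) := by
  intro P
  obtain ⟨p, hpath, hplen⟩ := P
  have hlen : p.length = n₁ + n₂ := by rw [hplen, grid_dist]
  have ex : ∀ i : Fin n₂, ∃ t, (i : ℕ) < ypF p t :=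
    fun i => ⟨n₁ + n₂, by rw [yp_stab p hlen le_rfl]; exact i.isLt⟩
  set vW : Fin n₂ → ℕ := fun i => Nat.find (ex i) - 1 with hvWdef
  have hvW : ∀ i, vW i = Nat.find (ex i) - 1 := fun i => rfl
  have hfind1 : ∀ i, 1 ≤ Nat.find (ex i) := by
    intro i
    by_contra h
    push_neg at h
    interval_cases h' : Nat.find (ex i)
    · have := Nat.find_spec (ex i)
      rw [h', yp_zero] at this
      omega
  have hchar : ∀ (i : Fin n₂) (t : ℕ), vW i < t ↔ (i : ℕ) < ypF p t := by
    intro i t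
    constructor
    · intro h
      have hft : Nat.find (ex i) ≤ t := by have := hfind1 i; have := hvW i; omega
      exact lt_of_lt_of_le (Nat.find_spec (ex i)) (yp_mono p hlen hft)
    · intro h
      have := Nat.find_min' (ex i) h
      have := hfind1 i
      have := hvW i
      omega
  have hyub : ∀ i, ypF p (vW i) ≤ (i : ℕ) := by
    intro i
    have h := Nat.find_min (ex i) (m := Nat.find (ex i) - 1) (by have := hfind1 i; omega)
    push_neg at h
    rw [hvW]
    exact h
  have hsm : StrictMono vW := by
    intro i j hij
    have h1 := hyub i
    have h2 := (yp_step p hlen (vW i)).2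
    by_contra hc
    push_neg at hc
    have h4 := (hchar j (vW i + 1)).mp (by omega)
    have hij' : (i : ℕ) < (j : ℕ) := hij
    omega
  have hbd : ∀ i, vW i < n₁ + n₂ :=
    fun i => (hchar i (n₁ + n₂)).mpr (by rw [yp_stab p hlen le_rfl]; exact i.isLt)
  refine ⟨⟨vW, hsm, hbd⟩, ?_⟩
  apply Subtype.ext
  show GW n₁ n₂ _ = p
  apply walk_eq_of_support_eq
  rw [GW_support, support_eq_map_getVert, hlen]
  apply List.map_congr_left
  intro t ht
  rw [List.mem_range] at ht
  have ht' : t ≤ n₁ + n₂ := by omega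
  have hYc : Yc n₂ vW t = ypF p t := by
    unfold Yc
    rw [filter_congr (fun i _ => by rw [hchar i t])]
    exact card_filter_val_lt (yp_le p t)
  have hrk := rk_eq p hlen ht'
  have hx := xp_le p t
  have hy := yp_le p t
  refine Prod.ext (Fin.ext ?_) (Fin.ext ?_) <;>
    simp only [gfun, Fin.val_mk, hYc] <;>
    unfold xpF ypF at * <;>
    omega

end Surj2

section AdjIff
variable {n₁ n₂ : ℕ}

lemma gfun_eq_iff {v v' : Fin n₂ → ℕ} {t : ℕ} (ht : t ≤ n₁ + n₂) :
    gfun n₁ v t = gfun n₁ v' t ↔ Yc n₂ v t = Yc n₂ v' t := by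
  constructor
  · intro h
    have hy := congrArg (fun q : Fin (n₁+1) × Fin (n₂+1) => ((q.2 : Fin (n₂+1)) : ℕ)) h
    simp only [gfun, Fin.val_mk] at hy
    have e1 : Yc n₂ v t ≤ n₂ := Yc_le_n t
    have e2 : Yc n₂ v' t ≤ n₂ := Yc_le_n t
    omega
  · intro h
    refine Prod.ext (Fin.ext ?_) (Fin.ext ?_) <;> simp only [gfun, Fin.val_mk, h]

lemma toGeo_getD (w : Vt n₁ n₂) (j : ℕ) :
    (toGeo n₁ n₂ w).1.support.getD j ((0 : Fin (n₁+1)), (0 : Fin (n₂+1))) =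
      if j < n₁ + n₂ + 1 then gfun n₁ w.1 j else (0, 0) := by
  show (GW n₁ n₂ w).support.getD _ _ = _
  rw [GW_support, getD_map_range]

lemma diffAt_of_succ (w w' : Vt n₁ n₂) (k : Fin n₂) (hk : w.1 k = w'.1 k + 1)
    (ho : ∀ j, j ≠ k → w.1 j = w'.1 j) :
    DiffAt (toGeo n₁ n₂ w) (toGeo n₁ n₂ w') (w'.1 k + 1) := by
  have hτ : w'.1 k + 1 ≤ n₁ + n₂ := w'.2.2 k
  have hagree : ∀ t, t ≠ w'.1 k + 1 → Yc n₂ w.1 t = Yc n₂ w'.1 t := by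
    intro t htt
    unfold Yc
    congr 1
    apply filter_congr
    intro i _
    by_cases hik : i = k
    · subst hik
      rw [hk]
      constructor <;> intro <;> omega
    · rw [ho i hik]
  have hdiff : Yc n₂ w.1 (w'.1 k + 1) ≠ Yc n₂ w'.1 (w'.1 k + 1) := by
    have h1 : ¬ ((k : ℕ) < Yc n₂ w.1 (w'.1 k + 1)) := by
      rw [← Yc_lt_char w.2.1]
      omega
    have h2 : (k : ℕ) < Yc n₂ w'.1 (w'.1 k + 1) := by
      rw [← Yc_lt_char w'.2.1]
      omega
    omega
  constructor
  · rw [toGeo_getD, toGeo_getD, if_pos (by omega), if_pos (by omega)]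
    intro hgg
    exact hdiff ((gfun_eq_iff (by omega)).mp hgg)
  · intro j hj
    rw [toGeo_getD, toGeo_getD]
    split
    · next hlt => exact (gfun_eq_iff (by omega)).mpr (hagree j hj)
    · rfl

lemma adj_iff (w w' : Vt n₁ n₂) :
    (SPG (pathGraph (n₁+1) □ pathGraph (n₂+1)) (0,0) (Fin.last n₁, Fin.last n₂)).Adj
        (toGeo n₁ n₂ w) (toGeo n₁ n₂ w')
      ↔ ∃ k, ((w.1 k : ℤ) - (w'.1 k : ℤ)).natAbs = 1 ∧ ∀ j, j ≠ k → w.1 j = w'.1 j := by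
  constructor
  · rintro ⟨i, hne, hoth⟩
    have hilt : i < n₁ + n₂ + 1 := by
      by_contra hbig
      apply hne
      rw [toGeo_getD, toGeo_getD, if_neg (by omega), if_neg (by omega)]
    have hYne : Yc n₂ w.1 i ≠ Yc n₂ w'.1 i := by
      intro hy
      apply hne
      rw [toGeo_getD, toGeo_getD, if_pos hilt, if_pos hilt]
      exact (gfun_eq_iff (by omega)).mpr hy
    have hYag : ∀ t, t ≠ i → Yc n₂ w.1 t = Yc n₂ w'.1 t := by
      intro t htne
      rcases lt_or_ge t (n₁ + n₂ + 1) with hlt | hge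
      · have h := hoth t htne
        rw [toGeo_getD, toGeo_getD, if_pos hlt, if_pos hlt] at h
        exact (gfun_eq_iff (by omega)).mp h
      · rw [Yc_stab w.2.2 (by omega), Yc_stab w'.2.2 (by omega)]
    have hclass : ∀ l : Fin n₂, w.1 l = w'.1 l ∨
        (w.1 l + 1 = i ∧ w'.1 l = i) ∨ (w'.1 l + 1 = i ∧ w.1 l = i) := by
      intro l
      rcases Nat.lt_trichotomy (w.1 l) (w'.1 l) with hlt | heq | hgt
      · right; left
        have hA : w'.1 l = i := by
          by_contra hne2
          have h1 : ¬ (l : ℕ) < Yc n₂ w'.1 (w'.1 l) := by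
            rw [← Yc_lt_char w'.2.1]; omega
          rw [← hYag _ hne2] at h1
          rw [← Yc_lt_char w.2.1] at h1
          omega
        refine ⟨?_, hA⟩
        by_contra hne2
        have h1 : (l : ℕ) < Yc n₂ w.1 (w.1 l + 1) := (Yc_lt_char w.2.1).mp (by omega)
        rw [hYag _ hne2] at h1
        have h2 := (Yc_lt_char w'.2.1).mpr h1
        omega
      · left; exact heq
      · right; right
        have hA : w.1 l = i := by
          by_contra hne2
          have h1 : ¬ (l : ℕ) < Yc n₂ w.1 (w.1 l) := by
            rw [← Yc_lt_char w.2.1]; omega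
          rw [hYag _ hne2] at h1
          rw [← Yc_lt_char w'.2.1] at h1
          omega
        refine ⟨?_, hA⟩
        by_contra hne2
        have h1 : (l : ℕ) < Yc n₂ w'.1 (w'.1 l + 1) := (Yc_lt_char w'.2.1).mp (by omega)
        rw [← hYag _ hne2] at h1
        have h2 := (Yc_lt_char w.2.1).mpr h1
        omega
    have hnotboth : ∀ a b : Fin n₂, (w.1 a + 1 = i ∧ w'.1 a = i) →
        (w'.1 b + 1 = i ∧ w.1 b = i) → False := by
      rintro a b ⟨ha1, ha2⟩ ⟨hb1, hb2⟩
      apply hYne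
      unfold Yc
      apply Finset.card_bij (fun l _ => Equiv.swap a b l)
      · intro l hl
        simp only [mem_filter, mem_univ, true_and] at hl ⊢
        by_cases hla : l = a
        · subst hla
          rw [Equiv.swap_apply_left]
          omega
        · by_cases hlb : l = b
          · subst hlb
            omega
          · rw [Equiv.swap_apply_of_ne_of_ne hla hlb]
            rcases hclass l with h | h | h
            · omega
            · exact absurd (w'.2.1.injective (h.2.trans ha2.symm)) hla
            · omega
      · intro x _ y _ hxy
        exact (Equiv.swap a b).injective hxy
      · intro y hy
        simp only [mem_filter, mem_univ, true_and] at hy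
        refine ⟨Equiv.swap a b y, ?_, Equiv.swap_apply_self a b y⟩
        simp only [mem_filter, mem_univ, true_and]
        by_cases hya : y = a
        · subst hya
          omega
        · by_cases hyb : y = b
          · subst hyb
            rw [Equiv.swap_apply_right]
            omega
          · rw [Equiv.swap_apply_of_ne_of_ne hya hyb]
            rcases hclass y with h | h | h
            · omega
            · omega
            · exact absurd (w.2.1.injective (h.2.trans hb2.symm)) hyb
    by_cases hD : ∀ l, w.1 l = w'.1 l
    · exfalso
      apply hYne
      unfold Yc
      congr 1
      apply filter_congr
      intro l _
      rw [hD l]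
    · push_neg at hD
      obtain ⟨k, hkne⟩ := hD
      refine ⟨k, ?_, ?_⟩
      · rcases hclass k with h | h | h
        · exact absurd h hkne
        · omega
        · omega
      · intro j hjk
        by_contra hjne
        rcases hclass j with hj1 | hj2 | hj3
        · exact hjne hj1
        · rcases hclass k with hk1 | hk2 | hk3
          · exact hkne hk1
          · exact hjk (w'.2.1.injective (hj2.2.trans hk2.2.symm))
          · exact hnotboth j k hj2 hk3
        · rcases hclass k with hk1 | hk2 | hk3
          · exact hkne hk1
          · exact hnotboth k j hk2 hj3
          · exact hjk (w.2.1.injective (hj3.2.trans hk3.2.symm))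
  · rintro ⟨k, habs, ho⟩
    rcases Int.natAbs_eq_iff.mp habs with h | h
    · have hk : w.1 k = w'.1 k + 1 := by omega
      exact ⟨_, diffAt_of_succ w w' k hk ho⟩
    · have hk : w'.1 k = w.1 k + 1 := by omega
      have hd := diffAt_of_succ w' w k hk (fun j hj => (ho j hj).symm)
      exact SimpleGraph.Adj.symm ⟨_, hd⟩

end AdjIff

section Final
variable {n₁ n₂ : ℕ}

lemma le_v {v : Fin n₂ → ℕ} (hv : StrictMono v) (i : Fin n₂) : (i : ℕ) ≤ v i := by
  have hpos : 0 < n₂ := i.pos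
  have h := smono_gap hv (i : ℕ) ⟨0, hpos⟩ (by simpa using i.isLt)
  have he : (⟨(0 : ℕ) + (i : ℕ), by simpa using i.isLt⟩ : Fin n₂) = i :=
    Fin.ext (by simp)
  rw [he] at h
  omega

lemma gap_le {v : Fin n₂ → ℕ} (hv : StrictMono v) {i j : Fin n₂} (hij : i ≤ j) :
    v i + ((j : ℕ) - (i : ℕ)) ≤ v j := by
  have hij' : (i : ℕ) ≤ (j : ℕ) := hij
  have hlt : (i : ℕ) + ((j : ℕ) - (i : ℕ)) < n₂ := by have := j.isLt; omega
  have h := smono_gap hv ((j : ℕ) - (i : ℕ)) i hlt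
  have he : (⟨(i : ℕ) + ((j : ℕ) - (i : ℕ)), hlt⟩ : Fin n₂) = j :=
    Fin.ext (by simp only [Fin.val_mk]; omega)
  rw [he] at h
  exact h

def Stair (n₁ n₂ : ℕ) : Set (Fin n₂ → ℤ) :=
  {f : Fin n₂ → ℤ | (∀ i, 0 ≤ f i ∧ f i ≤ (n₁ : ℤ)) ∧ Antitone f}

def vtEquiv : Vt n₁ n₂ ≃ Stair n₁ n₂ where
  toFun w := ⟨fun i => (n₁ : ℤ) + (i : ℕ) - (w.1 i : ℤ), by
    constructor
    · intro i
      have h1 := v_le w.2.1 w.2.2 i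
      have h2 := le_v w.2.1 i
      constructor <;> [skip; skip] <;> push_cast <;> omega
    · intro i j hij
      have h := gap_le w.2.1 hij
      have hij' : (i : ℕ) ≤ (j : ℕ) := hij
      simp only
      push_cast
      omega⟩
  invFun f := ⟨fun i => ((n₁ : ℤ) + (i : ℕ) - f.1 i).toNat, by
    constructor
    · intro i j hij
      show ((n₁ : ℤ) + (i : ℕ) - f.1 i).toNat < ((n₁ : ℤ) + (j : ℕ) - f.1 j).toNat
      have hfj := f.2.2 (le_of_lt hij)
      have hb1 := (f.2.1 i).2
      have hb2 := (f.2.1 j).2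
      have hij' : (i : ℕ) < (j : ℕ) := hij
      omega
    · intro i
      show ((n₁ : ℤ) + (i : ℕ) - f.1 i).toNat < n₁ + n₂
      have hb1 := (f.2.1 i).1
      have := i.isLt
      omega⟩
  left_inv w := by
    apply Subtype.ext
    funext i
    show ((n₁ : ℤ) + (i : ℕ) - ((n₁ : ℤ) + (i : ℕ) - (w.1 i : ℤ))).toNat = w.1 i
    omega
  right_inv f := by
    apply Subtype.ext
    funext i
    show (n₁ : ℤ) + (i : ℕ) - ((((n₁ : ℤ) + (i : ℕ) - f.1 i).toNat : ℕ) : ℤ) = f.1 i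
    have hb1 := (f.2.1 i).1
    have hb2 := (f.2.1 i).2
    omega

lemma lat_iff (w w' : Vt n₁ n₂) :
    ((latticeGraph n₂).induce (Stair n₁ n₂)).Adj (vtEquiv w) (vtEquiv w') ↔
      ∃ k, ((w.1 k : ℤ) - (w'.1 k : ℤ)).natAbs = 1 ∧ ∀ j, j ≠ k → w.1 j = w'.1 j := by
  show (latticeGraph n₂).Adj _ _ ↔ _
  constructor
  · rintro ⟨k, h1, h2⟩
    have h1' : (((n₁ : ℤ) + (k : ℕ) - (w.1 k : ℤ))
        - ((n₁ : ℤ) + (k : ℕ) - (w'.1 k : ℤ))).natAbs = 1 := h1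
    refine ⟨k, by omega, fun j hj => ?_⟩
    have h2' : (n₁ : ℤ) + (j : ℕ) - (w.1 j : ℤ)
        = (n₁ : ℤ) + (j : ℕ) - (w'.1 j : ℤ) := h2 j hj
    omega
  · rintro ⟨k, h1, h2⟩
    refine ⟨k, show (((n₁ : ℤ) + (k : ℕ) - (w.1 k : ℤ))
        - ((n₁ : ℤ) + (k : ℕ) - (w'.1 k : ℤ))).natAbs = 1 by omega,
      fun j hj => show (n₁ : ℤ) + (j : ℕ) - (w.1 j : ℤ)
        = (n₁ : ℤ) + (j : ℕ) - (w'.1 j : ℤ) by rw [h2 j hj]⟩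

noncomputable def E (n₁ n₂ : ℕ) :
    Vt n₁ n₂ ≃ Geodesic (pathGraph (n₁+1) □ pathGraph (n₂+1)) (0,0) (Fin.last n₁, Fin.last n₂) :=
  Equiv.ofBijective (toGeo n₁ n₂) ⟨toGeo_inj n₁ n₂, toGeo_surj⟩

end Final
end Stmt18

theorem stmt18 (n₁ n₂ : ℕ) :
    Nonempty (SPG (pathGraph (n₁ + 1) □ pathGraph (n₂ + 1))
        (0, 0) (Fin.last n₁, Fin.last n₂) ≃g
      ((latticeGraph n₂).induce
        {f : Fin n₂ → ℤ | (∀ i, 0 ≤ f i ∧ f i ≤ (n₁ : ℤ)) ∧ Antitone f})) := by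
  refine ⟨{ toEquiv := (Stmt18.E n₁ n₂).symm.trans Stmt18.vtEquiv, map_rel_iff' := ?_ }⟩
  intro U W
  have hU : Stmt18.toGeo n₁ n₂ ((Stmt18.E n₁ n₂).symm U) = U :=
    (Stmt18.E n₁ n₂).apply_symm_apply U
  have hW : Stmt18.toGeo n₁ n₂ ((Stmt18.E n₁ n₂).symm W) = W :=
    (Stmt18.E n₁ n₂).apply_symm_apply W
  have key := (Stmt18.lat_iff ((Stmt18.E n₁ n₂).symm U) ((Stmt18.E n₁ n₂).symm W)).trans
    (Stmt18.adj_iff ((Stmt18.E n₁ n₂).symm U) ((Stmt18.E n₁ n₂).symm W)).symm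
  rw [hU, hW] at key
  exact key
end
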